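/- Let G be a nontrivial finite supersolvable group of odd order that is a quotient of the von Dyck group D(3,3,7). Then |G| = 3·7^n for some natural number n. -/

import Mathlib

/-- The von Dyck group `D(a,b,c) = ⟨x, y ∣ x^a = y^b = (xy)^c = 1⟩`. -/
def dyckRels (a b c : ℕ) : Set (FreeGroup (Fin 2)) :=
  {FreeGroup.of 0 ^ a, FreeGroup.of 1 ^ b, (FreeGroup.of 0 * FreeGroup.of 1) ^ c}

abbrev DyckGroup (a b c : ℕ) : Type := PresentedGroup (dyckRels a b c)

/-- A group is supersolvable if it has a finite chain of subgroups, each normal in the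
whole group, with cyclic successive quotients (`H (i+1) / H i` is cyclic iff
`H (i+1) = H i ⊔ ⟨x⟩` for some `x ∈ H (i+1)`). -/
def IsSupersolvable (G : Type*) [Group G] : Prop :=
  ∃ (n : ℕ) (H : ℕ → Subgroup G),
    H 0 = ⊥ ∧ H n = ⊤ ∧ (∀ i, (H i).Normal) ∧
    ∀ i < n, H i ≤ H (i + 1) ∧
      ∃ x ∈ H (i + 1), H (i + 1) = H i ⊔ Subgroup.closure {x}

section Dyck
variable {Q : Type*} [Group Q]

lemma dyck_rel_one (w : FreeGroup (Fin 2)) (hw : w ∈ dyckRels 3 3 7) :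
    PresentedGroup.mk (dyckRels 3 3 7) w = 1 := by
  have : w ∈ Subgroup.normalClosure (dyckRels 3 3 7) := Subgroup.subset_normalClosure hw
  exact (QuotientGroup.eq_one_iff w).mpr this

lemma dyck_gen (g : DyckGroup 3 3 7 →* Q) (hg : Function.Surjective g) :
    (g (.of 0)) ^ 3 = 1 ∧ (g (.of 1)) ^ 3 = 1 ∧ (g (.of 0) * g (.of 1)) ^ 7 = 1 ∧
      Subgroup.closure {g (.of 0), g (.of 1)} = ⊤ := by
  have h0 : (g (.of 0)) ^ 3 = 1 := by
    rw [show (PresentedGroup.of 0 : DyckGroup 3 3 7) = PresentedGroup.mk _ (FreeGroup.of 0) from rfl,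
      ← map_pow, ← map_pow, dyck_rel_one _ (by left; rfl), map_one]
  have h1 : (g (.of 1)) ^ 3 = 1 := by
    rw [show (PresentedGroup.of 1 : DyckGroup 3 3 7) = PresentedGroup.mk _ (FreeGroup.of 1) from rfl,
      ← map_pow, ← map_pow, dyck_rel_one _ (by right; left; rfl), map_one]
  have h2 : (g (.of 0) * g (.of 1)) ^ 7 = 1 := by
    rw [show (PresentedGroup.of 0 : DyckGroup 3 3 7) = PresentedGroup.mk _ (FreeGroup.of 0) from rfl,
      show (PresentedGroup.of 1 : DyckGroup 3 3 7) = PresentedGroup.mk _ (FreeGroup.of 1) from rfl,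
      ← map_mul, ← map_mul, ← map_pow, ← map_pow, dyck_rel_one _ (by right; right; rfl), map_one]
  refine ⟨h0, h1, h2, ?_⟩
  have himg : ⇑g '' Set.range (PresentedGroup.of (rels := dyckRels 3 3 7))
      = {g (.of 0), g (.of 1)} := by
    rw [← Set.range_comp]
    ext z
    constructor
    · rintro ⟨i, rfl⟩
      fin_cases i
      · exact Or.inl rfl
      · exact Or.inr rfl
    · rintro (rfl | rfl)
      exacts [⟨0, rfl⟩, ⟨1, rfl⟩]
  rw [← himg, ← MonoidHom.map_closure, PresentedGroup.closure_range_of, ← MonoidHom.range_eq_map,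
    MonoidHom.range_eq_top]
  exact hg

lemma dyck_card_dvd_of_mul_eq_one [Finite Q] (g : DyckGroup 3 3 7 →* Q)
    (hg : Function.Surjective g) (h : g (.of 0) * g (.of 1) = 1) : Nat.card Q ∣ 3 := by
  obtain ⟨h0, h1, h2, hcl⟩ := dyck_gen g hg
  have hb : g (.of 1) = (g (.of 0))⁻¹ := by
    rw [← one_mul (g (.of 1)), ← inv_mul_cancel (g (.of 0)), mul_assoc, h, mul_one]
  have htop : Subgroup.zpowers (g (.of 0)) = ⊤ := by
    rw [eq_top_iff, ← hcl, Subgroup.closure_le]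
    rintro z (rfl | rfl)
    · exact Subgroup.mem_zpowers _
    · rw [hb]; exact Subgroup.inv_mem _ (Subgroup.mem_zpowers _)
  have : Nat.card Q = orderOf (g (.of 0)) := by
    rw [← Nat.card_zpowers, htop, Subgroup.card_top]
  rw [this]
  exact orderOf_dvd_of_pow_eq_one h0

lemma dyck_card_dvd_of_not_seven_dvd [Finite Q] (g : DyckGroup 3 3 7 →* Q)
    (hg : Function.Surjective g) (h7 : ¬ (7 ∣ Nat.card Q)) : Nat.card Q ∣ 3 := by
  obtain ⟨h0, h1, h2, hcl⟩ := dyck_gen g hg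
  apply dyck_card_dvd_of_mul_eq_one g hg
  rw [← orderOf_eq_one_iff]
  have d1 : orderOf (g (.of 0) * g (.of 1)) ∣ 7 := orderOf_dvd_of_pow_eq_one h2
  have d2 : orderOf (g (.of 0) * g (.of 1)) ∣ Nat.card Q := orderOf_dvd_natCard _
  have hcop : Nat.Coprime 7 (Nat.card Q) := (Nat.Prime.coprime_iff_not_dvd (by norm_num)).mpr h7
  exact Nat.eq_one_of_dvd_coprimes hcop d1 d2

lemma dyck_card_dvd_of_comm [Finite Q] (g : DyckGroup 3 3 7 →* Q)
    (hg : Function.Surjective g) (hc : ∀ u v : Q, u * v = v * u) : Nat.card Q ∣ 3 := by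
  obtain ⟨h0, h1, h2, hcl⟩ := dyck_gen g hg
  apply dyck_card_dvd_of_mul_eq_one g hg
  rw [← orderOf_eq_one_iff]
  have d1 : orderOf (g (.of 0) * g (.of 1)) ∣ 7 := orderOf_dvd_of_pow_eq_one h2
  have d2 : orderOf (g (.of 0) * g (.of 1)) ∣ 3 := by
    apply orderOf_dvd_of_pow_eq_one
    have hcomm : Commute (g (.of 0)) (g (.of 1)) := hc _ _
    rw [hcomm.mul_pow, h0, h1, one_mul]
  have : orderOf (g (.of 0) * g (.of 1)) ∣ 1 := Nat.dvd_gcd d2 d1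
  simpa using this

end Dyck



lemma IsSupersolvable.of_surjective {G Q : Type*} [Group G] [Group Q]
    (π : G →* Q) (hπ : Function.Surjective π) (h : IsSupersolvable G) : IsSupersolvable Q := by
  obtain ⟨n, H, hbot, htop, hnorm, hstep⟩ := h
  refine ⟨n, fun i => (H i).map π, by simp [hbot], ?_, fun i => (hnorm i).map π hπ, ?_⟩
  · show Subgroup.map π (H n) = ⊤
    rw [htop, ← MonoidHom.range_eq_map, MonoidHom.range_eq_top]; exact hπ
  · intro i hi
    obtain ⟨hle, x, hx, hsup⟩ := hstep i hi
    refine ⟨Subgroup.map_mono hle, π x, Subgroup.mem_map_of_mem π hx, ?_⟩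
    show Subgroup.map π (H (i + 1)) = Subgroup.map π (H i) ⊔ Subgroup.closure {π x}
    rw [hsup, Subgroup.map_sup, MonoidHom.map_closure, Set.image_singleton]

lemma exists_prime_order_normal {G : Type*} [Group G] [Finite G] (hG : Nontrivial G)
    (hss : IsSupersolvable G) :
    ∃ (N : Subgroup G) (q : ℕ), q.Prime ∧ N.Normal ∧ Nat.card N = q := by
  classical
  obtain ⟨n, H, hbot, htop, hnorm, hstep⟩ := hss
  have hex : ∃ i, H i ≠ ⊥ := ⟨n, by rw [htop]; exact top_ne_bot⟩
  set i := Nat.find hex with hi_def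
  have hi : H i ≠ ⊥ := Nat.find_spec hex
  have hmin : ∀ j < i, H j = ⊥ := fun j hj => by
    by_contra hj'
    exact Nat.find_min hex hj hj'
  have hi0 : i ≠ 0 := fun h => hi (h ▸ hbot)
  have hin : i ≤ n := by
    by_contra hlt
    have := hmin n (lt_of_not_ge hlt)
    rw [htop] at this
    exact top_ne_bot this
  have hi1n : i - 1 < n := by omega
  obtain ⟨hle, x, hx, hsup⟩ := hstep (i - 1) hi1n
  have hstep' : H (i - 1 + 1) = Subgroup.closure {x} := by
    rw [hsup, hmin (i - 1) (by omega), bot_sup_eq]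
  have hIx : H i = Subgroup.zpowers x := by
    rw [show i = i - 1 + 1 by omega, hstep', Subgroup.zpowers_eq_closure]
  have hx1 : x ≠ 1 := by
    rintro rfl
    rw [show i = i - 1 + 1 by omega, hstep', Subgroup.closure_singleton_one] at hi
    exact hi rfl
  have hd1 : orderOf x ≠ 1 := by simpa using hx1
  set q := (orderOf x).minFac with hq_def
  have hq : q.Prime := Nat.minFac_prime hd1
  have hdvd : q ∣ orderOf x := Nat.minFac_dvd _
  set y := x ^ (orderOf x / q) with hy_def
  have hoy : orderOf y = q := by
    rw [hy_def, orderOf_pow]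
    rw [Nat.gcd_eq_right (Nat.div_dvd_of_dvd hdvd)]
    exact Nat.div_div_self hdvd (orderOf_pos x).ne'
  refine ⟨Subgroup.zpowers y, q, hq, ?_, by rw [Nat.card_zpowers, hoy]⟩
  constructor
  intro m hm g
  obtain ⟨k, rfl⟩ := Subgroup.mem_zpowers_iff.mp hm
  have hxn : g * x * g⁻¹ ∈ H i := (hnorm i).conj_mem x (hIx ▸ Subgroup.mem_zpowers x) g
  obtain ⟨j, hj⟩ := Subgroup.mem_zpowers_iff.mp (hIx ▸ hxn)
  have hygen : g * y * g⁻¹ ∈ Subgroup.zpowers y := by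
    have : g * y * g⁻¹ = (g * x * g⁻¹) ^ (orderOf x / q) := by
      rw [hy_def, conj_pow]
    rw [this, ← hj, ← zpow_natCast, ← zpow_mul, mul_comm j, zpow_mul, zpow_natCast]
    exact Subgroup.zpow_mem _ (Subgroup.mem_zpowers _) j
  have : g * y ^ k * g⁻¹ = (g * y * g⁻¹) ^ k := by rw [conj_zpow]
  rw [this]
  exact Subgroup.zpow_mem _ hygen k

lemma mulAut_comm_of_prime_card {H : Type*} [Group H] {q : ℕ} (hq : q.Prime)
    (h : Nat.card H = q) (σ τ : MulAut H) : σ * τ = τ * σ := by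
  haveI : Fact q.Prime := ⟨hq⟩
  haveI : Finite H := Nat.finite_of_card_ne_zero (by rw [h]; exact hq.pos.ne')
  haveI : IsCyclic H := isCyclic_of_prime_card h
  obtain ⟨g₀, hg₀⟩ := IsCyclic.exists_generator (α := H)
  obtain ⟨i, hi⟩ := Subgroup.mem_zpowers_iff.mp (hg₀ (σ g₀))
  obtain ⟨j, hj⟩ := Subgroup.mem_zpowers_iff.mp (hg₀ (τ g₀))
  ext z
  obtain ⟨k, rfl⟩ := Subgroup.mem_zpowers_iff.mp (hg₀ z)
  have : ∀ (ρ : MulAut H) (m : ℤ), ρ (g₀ ^ m) = (ρ g₀) ^ m := fun ρ m => map_zpow ρ g₀ m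
  simp only [MulAut.mul_apply, this, ← hi, ← hj, ← zpow_mul]
  ring_nf

universe u

lemma dyck_main_aux : ∀ (k : ℕ) (G : Type u) [Group G] [Finite G], Nat.card G = k →
    Odd (Nat.card G) → IsSupersolvable G →
    ∀ (f : DyckGroup 3 3 7 →* G), Function.Surjective f → Nontrivial G →
    ∃ n : ℕ, Nat.card G = 3 * 7 ^ n := by
  intro k
  induction k using Nat.strong_induction_on with
  | _ k ih =>
  intro G _ _ hk hodd hss f hf hnt
  obtain ⟨N, q, hq, hN, hcardN⟩ := exists_prime_order_normal hnt hss
  haveI := hN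
  have hGQ : Nat.card G = Nat.card (G ⧸ N) * q := by
    rw [Subgroup.card_eq_card_quotient_mul_card_subgroup N, hcardN]
  have hQpos : 0 < Nat.card (G ⧸ N) := Nat.card_pos
  rcases subsingleton_or_nontrivial (G ⧸ N) with hsub | hnt'
  · have hq1 : Nat.card (G ⧸ N) = 1 := Nat.card_eq_one_iff_unique.mpr ⟨hsub, ⟨1⟩⟩
    have hcardG : Nat.card G = q := by rw [hGQ, hq1, one_mul]
    by_cases h7 : q = 7
    · exfalso
      obtain ⟨h0, h1, h2, hcl⟩ := dyck_gen f hf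
      have ha : f (.of 0) = 1 := by
        rw [← orderOf_eq_one_iff]
        have d1 : orderOf (f (.of 0)) ∣ 3 := orderOf_dvd_of_pow_eq_one h0
        have d2 : orderOf (f (.of 0)) ∣ 7 := by
          have := orderOf_dvd_natCard (f (.of 0))
          rwa [hcardG, h7] at this
        simpa using Nat.dvd_gcd d1 d2
      have hb : f (.of 1) = 1 := by
        rw [← orderOf_eq_one_iff]
        have d1 : orderOf (f (.of 1)) ∣ 3 := orderOf_dvd_of_pow_eq_one h1
        have d2 : orderOf (f (.of 1)) ∣ 7 := by
          have := orderOf_dvd_natCard (f (.of 1))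
          rwa [hcardG, h7] at this
        simpa using Nat.dvd_gcd d1 d2
      rw [ha, hb, Set.pair_eq_singleton, Subgroup.closure_singleton_one] at hcl
      exact bot_ne_top hcl
    · have h7' : ¬ 7 ∣ Nat.card G := by
        rw [hcardG]
        intro hdvd
        exact h7 ((Nat.prime_dvd_prime_iff_eq (by norm_num) hq).mp hdvd).symm
      have hdvd3 := dyck_card_dvd_of_not_seven_dvd f hf h7'
      rw [hcardG] at hdvd3
      have hq3 : q = 3 := (Nat.prime_dvd_prime_iff_eq hq (by norm_num)).mp hdvd3
      exact ⟨0, by rw [hcardG, hq3]; norm_num⟩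
  · have hlt : Nat.card (G ⧸ N) < k := by
      rw [← hk, hGQ]
      nlinarith [hq.two_le, hQpos]
    set π := QuotientGroup.mk' N with hπ_def
    have hπ : Function.Surjective π := QuotientGroup.mk'_surjective N
    have hoddQ : Odd (Nat.card (G ⧸ N)) := by
      rcases Nat.even_or_odd (Nat.card (G ⧸ N)) with he | ho
      · exact absurd (hGQ ▸ he.mul_right q) (Nat.not_even_iff_odd.mpr hodd)
      · exact ho
    obtain ⟨m, hm⟩ := ih _ hlt (G ⧸ N) rfl hoddQ (hss.of_surjective π hπ)
      (π.comp f) (hπ.comp hf) hnt'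
    by_cases hq7 : q = 7
    · exact ⟨m + 1, by rw [hGQ, hm, hq7]; ring⟩
    exfalso
    by_cases hq3 : q = 3
    · haveI : Fact (Nat.Prime 7) := ⟨by norm_num⟩
      have hcardG : Nat.card G = 9 * 7 ^ m := by rw [hGQ, hm, hq3]; ring
      obtain ⟨P⟩ : Nonempty (Sylow 7 G) := inferInstance
      have h7m : (0:ℕ) < 7 ^ m := pow_pos (by norm_num) m
      have hcardP : Nat.card P = 7 ^ m := by
        rw [Sylow.card_eq_multiplicity, hcardG]
        congr 1
        rw [Nat.factorization_mul (by norm_num) (pow_ne_zero m (by norm_num))]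
        simp [Nat.factorization_eq_zero_of_not_dvd (by norm_num : ¬ (7:ℕ) ∣ 9),
          Nat.Prime.factorization_pow (by norm_num : Nat.Prime 7)]
      have hPindex : (P : Subgroup G).index = 9 := by
        have h1 := Subgroup.card_mul_index (P : Subgroup G)
        rw [hcardP, hcardG] at h1
        have : 7 ^ m * (P : Subgroup G).index = 7 ^ m * 9 := by linarith
        exact Nat.eq_of_mul_eq_mul_left h7m this
      have hsyl : Nat.card (Sylow 7 G) = 1 := by
        have hdvd : Nat.card (Sylow 7 G) ∣ 9 := hPindex ▸ P.card_dvd_index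
        have hmod : Nat.card (Sylow 7 G) % 7 = 1 % 7 := card_sylow_modEq_one 7 G
        have hle : Nat.card (Sylow 7 G) ≤ 9 := Nat.le_of_dvd (by norm_num) hdvd
        have hpos : 0 < Nat.card (Sylow 7 G) := Nat.card_pos
        interval_cases h : (Nat.card (Sylow 7 G)) <;> omega
      haveI hPnorm : (P : Subgroup G).Normal := by
        apply Subgroup.normalizer_eq_top_iff.mp
        apply Subgroup.index_eq_one.mp
        exact (Sylow.card_eq_index_normalizer P).symm.trans hsyl
      have hcardQP : Nat.card (G ⧸ (P : Subgroup G)) = 9 := by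
        have h1 := Subgroup.card_eq_card_quotient_mul_card_subgroup (P : Subgroup G)
        rw [hcardG, hcardP] at h1
        have : Nat.card (G ⧸ (P : Subgroup G)) * 7 ^ m = 9 * 7 ^ m := by linarith
        exact Nat.eq_of_mul_eq_mul_right h7m this
      have h7' : ¬ 7 ∣ Nat.card (G ⧸ (P : Subgroup G)) := by rw [hcardQP]; decide
      have h93 := dyck_card_dvd_of_not_seven_dvd ((QuotientGroup.mk' _).comp f)
        ((QuotientGroup.mk'_surjective _).comp hf) h7'
      rw [hcardQP] at h93
      norm_num at h93
    · -- centralizer branch : q ∉ {3,7}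
      have hq2 := hq.two_le
      have h7m : (0:ℕ) < 7 ^ m := pow_pos (by norm_num) m
      have hcardG : Nat.card G = q * (3 * 7 ^ m) := by rw [hGQ, hm]; ring
      haveI : Fact q.Prime := ⟨hq⟩
      haveI : IsCyclic N := isCyclic_of_prime_card hcardN
      letI : CommGroup N := IsCyclic.commGroup
      set φ : G →* MulAut N := MulAut.conjNormal with hφ_def
      set C := φ.ker with hC_def
      haveI hCnorm : C.Normal := φ.normal_ker
      have hCcomm : ∀ u v : G ⧸ C, u * v = v * u := by
        intro u v
        obtain ⟨g₁, rfl⟩ := QuotientGroup.mk_surjective u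
        obtain ⟨g₂, rfl⟩ := QuotientGroup.mk_surjective v
        apply QuotientGroup.kerLift_injective φ
        have hcm : φ g₁ * φ g₂ = φ g₂ * φ g₁ := mulAut_comm_of_prime_card hq hcardN _ _
        rw [← QuotientGroup.mk_mul, ← QuotientGroup.mk_mul, QuotientGroup.kerLift_mk,
          QuotientGroup.kerLift_mk, map_mul, map_mul, hcm]
      have hC3 : Nat.card (G ⧸ C) ∣ 3 :=
        dyck_card_dvd_of_comm ((QuotientGroup.mk' C).comp f)
          ((QuotientGroup.mk'_surjective C).comp hf) hCcomm
      have hNC : N ≤ C := by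
        intro x hx
        show φ x = 1
        rw [hφ_def]
        ext m
        show ((MulAut.conjNormal x) m : G) = ((1 : MulAut N) m : G)
        rw [MulAut.conjNormal_apply, MulAut.one_apply]
        have hcm : (⟨x, hx⟩ : N) * m = m * ⟨x, hx⟩ := mul_comm _ _
        have hcm' : x * (m : G) = (m : G) * x := congrArg Subtype.val hcm
        rw [hcm', mul_assoc, mul_inv_cancel, mul_one]
      have hcent : ∀ c ∈ C, ∀ x ∈ N, c * x * c⁻¹ = x := by
        intro c hc x hx
        have hc1 : φ c = 1 := hc
        have := congrArg (fun ρ : MulAut N => ((ρ ⟨x, hx⟩ : N) : G)) hc1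
        simpa [hφ_def, MulAut.conjNormal_apply] using this
      have hCindex := Subgroup.card_eq_card_quotient_mul_card_subgroup C
      rcases (Nat.prime_three).eq_one_or_self_of_dvd _ hC3 with ht1 | ht3
      · -- C = ⊤ : N central
        have hCtop : C = ⊤ := by
          apply Subgroup.index_eq_one.mp
          rw [Subgroup.index_eq_card, ht1]
        have hcentral : ∀ (g x : G), x ∈ N → g * x * g⁻¹ = x := fun g x hx =>
          hcent g (hCtop ▸ Subgroup.mem_top g) x hx
        have hNidx : N.index = 3 * 7 ^ m := by
          have h1 := Subgroup.card_mul_index N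
          rw [hcardN, hcardG] at h1
          exact Nat.eq_of_mul_eq_mul_left hq.pos h1
        have hcop : Nat.Coprime (Nat.card N) N.index := by
          rw [hcardN, hNidx]
          refine Nat.Coprime.mul_right ((Nat.coprime_primes hq (by norm_num)).mpr hq3)
            (Nat.Coprime.pow_right _ ((Nat.coprime_primes hq (by norm_num)).mpr hq7))
        obtain ⟨Hc, hHc⟩ := Subgroup.exists_right_complement'_of_coprime hcop
        have hkey : ∀ n : G, n ∈ N → ∀ z : G, n * z * n⁻¹ = z := by
          intro n hn z
          have h' := hcentral z n hn
          have h'' : z * n = n * z := mul_inv_eq_iff_eq_mul.mp h'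
          rw [← h'', mul_assoc, mul_inv_cancel, mul_one]
        haveI : Hc.Normal := by
          constructor
          intro h hh g
          obtain ⟨x, hx, -⟩ := hHc.existsUnique g
          have hn₀ : (x.1 : G) ∈ N := x.1.2
          have hh₀ : (x.2 : G) ∈ Hc := x.2.2
          have hmem : (x.2 : G) * h * (x.2 : G)⁻¹ ∈ Hc := mul_mem (mul_mem hh₀ hh) (inv_mem hh₀)
          have hgx : (x.1 : G) * (x.2 : G) = g := hx
          rw [← hgx]
          have hre : (x.1 : G) * (x.2 : G) * h * ((x.1 : G) * (x.2 : G))⁻¹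
              = (x.1 : G) * ((x.2 : G) * h * (x.2 : G)⁻¹) * (x.1 : G)⁻¹ := by group
          rw [hre, hkey _ hn₀]
          exact hmem
        have hcardHc : Nat.card Hc = 3 * 7 ^ m := by
          have h1 := hHc.card_mul
          rw [hcardN, hcardG] at h1
          exact Nat.eq_of_mul_eq_mul_left hq.pos h1
        have hcardQHc : Nat.card (G ⧸ Hc) = q := by
          have h1 := Subgroup.card_eq_card_quotient_mul_card_subgroup Hc
          rw [hcardG, hcardHc] at h1
          have h37 : (0:ℕ) < 3 * 7 ^ m := by positivity
          exact (Nat.eq_of_mul_eq_mul_right h37 (by linarith)).symm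
        have h7' : ¬ 7 ∣ Nat.card (G ⧸ Hc) := by
          rw [hcardQHc]
          intro hd
          exact hq7 ((Nat.prime_dvd_prime_iff_eq (by norm_num) hq).mp hd).symm
        have hdvd := dyck_card_dvd_of_not_seven_dvd ((QuotientGroup.mk' Hc).comp f)
          ((QuotientGroup.mk'_surjective Hc).comp hf) h7'
        rw [hcardQHc] at hdvd
        exact hq3 ((Nat.prime_dvd_prime_iff_eq hq (by norm_num)).mp hdvd)
      · -- index of C is 3
        have hcardC : Nat.card C = q * 7 ^ m := by
          rw [hcardG, ht3] at hCindex
          exact Nat.eq_of_mul_eq_mul_left (by norm_num : (0:ℕ) < 3) (by linarith)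
        set N' := N.subgroupOf C with hN'_def
        haveI : N'.Normal := Subgroup.normal_subgroupOf
        have hcardN' : Nat.card N' = q := by
          rw [← hcardN]
          exact Nat.card_congr (Subgroup.subgroupOfEquivOfLe hNC).toEquiv
        have hN'idx : N'.index = 7 ^ m := by
          have h1 := Subgroup.card_mul_index N'
          rw [hcardN', hcardC] at h1
          exact Nat.eq_of_mul_eq_mul_left hq.pos h1
        have hcop : Nat.Coprime (Nat.card N') N'.index := by
          rw [hcardN', hN'idx]
          exact Nat.Coprime.pow_right _ ((Nat.coprime_primes hq (by norm_num)).mpr hq7)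
        obtain ⟨M₀, hM₀⟩ := Subgroup.exists_right_complement'_of_coprime hcop
        have hcardM₀ : Nat.card M₀ = 7 ^ m := by
          have h1 := hM₀.card_mul
          rw [hcardN', hcardC] at h1
          exact Nat.eq_of_mul_eq_mul_left hq.pos h1
        have hkeyC : ∀ n : C, (n : G) ∈ N → ∀ z : C, n * z * n⁻¹ = z := by
          intro n hn z
          have h' := hcent (z : G) z.2 (n : G) hn
          have h'' : (z : G) * (n : G) = (n : G) * (z : G) := mul_inv_eq_iff_eq_mul.mp h'
          apply Subtype.ext
          push_cast
          rw [← h'', mul_assoc, mul_inv_cancel, mul_one]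
        haveI : M₀.Normal := by
          constructor
          intro h hh c
          obtain ⟨x, hx, -⟩ := hM₀.existsUnique c
          have hn₀ : ((x.1 : C) : G) ∈ N := x.1.2
          have hh₀ : (x.2 : C) ∈ M₀ := x.2.2
          have hmem : (x.2 : C) * h * (x.2 : C)⁻¹ ∈ M₀ := mul_mem (mul_mem hh₀ hh) (inv_mem hh₀)
          have hgx : (x.1 : C) * (x.2 : C) = c := hx
          rw [← hgx]
          have hre : (x.1 : C) * (x.2 : C) * h * ((x.1 : C) * (x.2 : C))⁻¹
              = (x.1 : C) * ((x.2 : C) * h * (x.2 : C)⁻¹) * (x.1 : C)⁻¹ := by group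
          rw [hre, hkeyC _ hn₀]
          exact hmem
        set M := M₀.map C.subtype with hM_def
        have hcardM : Nat.card M = 7 ^ m := by
          rw [← hcardM₀]
          exact (Nat.card_congr (Subgroup.equivMapOfInjective M₀ C.subtype
            C.subtype_injective).toEquiv).symm
        have hMC : M ≤ C := Subgroup.map_subtype_le M₀
        have hcardQC : Nat.card (C ⧸ M₀) = q := by
          have h1 := Subgroup.card_eq_card_quotient_mul_card_subgroup M₀
          rw [hcardC, hcardM₀] at h1
          exact Nat.eq_of_mul_eq_mul_right h7m (by linarith)
        haveI : M.Normal := by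
          constructor
          intro x hx g
          have hgx : g * x * g⁻¹ ∈ C := hCnorm.conj_mem _ (hMC hx) g
          set ψ := QuotientGroup.mk' M₀ with hψ_def
          set X : Subgroup G := M.map (MulAut.conj g).toMonoidHom with hX_def
          have hXC : X ≤ C := by
            rintro _ ⟨m', hm', rfl⟩
            exact hCnorm.conj_mem _ (hMC hm') g
          have hcardX : Nat.card X = 7 ^ m := by
            rw [← hcardM]
            exact (Nat.card_congr (Subgroup.equivMapOfInjective M
              (MulAut.conj g).toMonoidHom (MulAut.conj g).injective).toEquiv).symm
          set X' := X.subgroupOf C with hX'_def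
          have hcardX' : Nat.card X' = 7 ^ m := by
            rw [← hcardX]
            exact Nat.card_congr (Subgroup.subgroupOfEquivOfLe hXC).toEquiv
          set S := X'.map ψ with hS_def
          have hSdvd1 : Nat.card S ∣ 7 ^ m := by
            have h1 : Nat.card (ψ.comp X'.subtype).range ∣ Nat.card X' :=
              Subgroup.card_dvd_of_surjective (ψ.comp X'.subtype).rangeRestrict
                (ψ.comp X'.subtype).rangeRestrict_surjective
            rw [MonoidHom.range_comp, Subgroup.range_subtype] at h1
            rw [← hcardX']
            exact h1
          have hSdvd2 : Nat.card S ∣ q := by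
            rw [← hcardQC]
            exact Subgroup.card_subgroup_dvd_card S
          have hScop : Nat.Coprime (7 ^ m) q :=
            Nat.Coprime.pow_left _ (((Nat.coprime_primes (by norm_num) hq).mpr
              (fun h => hq7 h.symm)))
          have hS1 : Nat.card S = 1 := Nat.eq_one_of_dvd_coprimes hScop hSdvd1 hSdvd2
          have hSbot : S = ⊥ := Subgroup.card_eq_one.mp hS1
          have hmemX : g * x * g⁻¹ ∈ X := by
            exact ⟨x, hx, by simp [MulAut.conj_apply]⟩
          have hmemX' : (⟨g * x * g⁻¹, hgx⟩ : C) ∈ X' := by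
            rw [hX'_def, Subgroup.mem_subgroupOf]
            exact hmemX
          have hmemS : ψ ⟨g * x * g⁻¹, hgx⟩ ∈ S := Subgroup.mem_map_of_mem ψ hmemX'
          rw [hSbot, Subgroup.mem_bot] at hmemS
          have hmemM₀ : (⟨g * x * g⁻¹, hgx⟩ : C) ∈ M₀ := by
            have : ((⟨g * x * g⁻¹, hgx⟩ : C) : C ⧸ M₀) = 1 := hmemS
            exact (QuotientGroup.eq_one_iff _).mp this
          exact ⟨_, hmemM₀, rfl⟩
        have hcardQM : Nat.card (G ⧸ M) = 3 * q := by
          have h1 := Subgroup.card_eq_card_quotient_mul_card_subgroup M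
          rw [hcardG, hcardM] at h1
          exact (Nat.eq_of_mul_eq_mul_right h7m (by linarith)).symm
        have h7' : ¬ 7 ∣ Nat.card (G ⧸ M) := by
          rw [hcardQM]
          intro hd
          rcases (Nat.Prime.dvd_mul (by norm_num)).mp hd with h | h
          · norm_num at h
          · exact hq7 ((Nat.prime_dvd_prime_iff_eq (by norm_num) hq).mp h).symm
        have hdvd := dyck_card_dvd_of_not_seven_dvd ((QuotientGroup.mk' M).comp f)
          ((QuotientGroup.mk'_surjective M).comp hf) h7'
        rw [hcardQM] at hdvd
        have hle : 3 * q ≤ 3 := Nat.le_of_dvd (by norm_num) hdvd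
        omega

/-- Theorem 5.1 (core): a nontrivial finite supersolvable group of odd order that is a
quotient of the von Dyck group `D(3,3,7)` has order `3·7^n`. -/
theorem supersolvable_odd_dyck_337_order (G : Type*) [Group G] [Finite G]
    (hG : Nontrivial G) (hodd : Odd (Nat.card G)) (hss : IsSupersolvable G)
    (f : DyckGroup 3 3 7 →* G) (hf : Function.Surjective f) :
    ∃ n : ℕ, Nat.card G = 3 * 7 ^ n :=
  dyck_main_aux (Nat.card G) G rfl hodd hss f hf hG
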